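/- Discrete validity–diversity trade-off: in the product geometric model, if P(V) ≥ 1 − ε for some ε ∈ (0,1), then Div(P) ≤ exp(−∑_{t=1}^{d} Δ_{v_t}(ln(1/ε))). -/

import Mathlib

open Finset

/-- The tilted distribution `p_{v,a}` on `{0,…,v−1}`:
`p_{v,a}(i) = exp(−a·i/v) / ∑_{j<v} exp(−a·j/v)`. -/
noncomputable def tiltedPMF (v : ℕ) (a : ℝ) (i : ℕ) : ℝ :=
  Real.exp (-a * i / v) / ∑ j ∈ Finset.range v, Real.exp (-a * j / v)

/-- Shannon entropy (natural log) of the tilted distribution. -/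
noncomputable def tiltedEntropy (v : ℕ) (a : ℝ) : ℝ :=
  -∑ i ∈ Finset.range v, tiltedPMF v a i * Real.log (tiltedPMF v a i)

/-- Entropy loss `Δ_v(a) = ln v − H_v(a)` relative to the uniform distribution. -/
noncomputable def entropyLoss (v : ℕ) (a : ℝ) : ℝ :=
  Real.log v - tiltedEntropy v a

/-- Product geometric distribution on `ℕ^d`: `P(y) = ∏_t (1−q_t)·q_t^{y_t}`. -/
noncomputable def geomProd {d : ℕ} (q : Fin d → ℝ) (y : Fin d → ℕ) : ℝ :=
  ∏ t, (1 - q t) * q t ^ (y t)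

/-- The valid set `V = {y ∈ ℕ^d : y_t < v_t for every t}` as a finite set. -/
def validSet {d : ℕ} (v : Fin d → ℕ) : Finset (Fin d → ℕ) :=
  Fintype.piFinset fun t => Finset.range (v t)

/-- Total probability mass `P(V)` of the valid set. -/
noncomputable def validMass {d : ℕ} (q : Fin d → ℝ) (v : Fin d → ℕ) : ℝ :=
  ∑ y ∈ validSet v, geomProd q y

/-- Shannon entropy of the conditional distribution `P(·|V)`. -/
noncomputable def condEntropy {d : ℕ} (q : Fin d → ℝ) (v : Fin d → ℕ) : ℝ :=
  -∑ y ∈ validSet v,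
      (geomProd q y / validMass q v) * Real.log (geomProd q y / validMass q v)

/-- Diversity `Div(P) = exp(H(P(·|V))) / |V|`. -/
noncomputable def diversity {d : ℕ} (q : Fin d → ℝ) (v : Fin d → ℕ) : ℝ :=
  Real.exp (condEntropy q v) / (validSet v).card

noncomputable def tZ (v : ℕ) (a : ℝ) : ℝ := ∑ j ∈ Finset.range v, Real.exp (-a * j / v)

lemma tZ_pos (v : ℕ) (hv : 1 ≤ v) (a : ℝ) : 0 < tZ v a :=
  Finset.sum_pos (fun j _ => Real.exp_pos _) (Finset.nonempty_range_iff.mpr (by omega))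

lemma tiltedPMF_pos (v : ℕ) (hv : 1 ≤ v) (a : ℝ) (i : ℕ) : 0 < tiltedPMF v a i :=
  div_pos (Real.exp_pos _) (tZ_pos v hv a)

lemma tiltedPMF_sum (v : ℕ) (hv : 1 ≤ v) (a : ℝ) :
    ∑ i ∈ Finset.range v, tiltedPMF v a i = 1 := by
  unfold tiltedPMF
  rw [← Finset.sum_div]
  exact div_self (ne_of_gt (tZ_pos v hv a))

lemma log_tiltedPMF (v : ℕ) (hv : 1 ≤ v) (a : ℝ) (i : ℕ) :
    Real.log (tiltedPMF v a i) = -a * i / v - Real.log (tZ v a) := by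
  unfold tiltedPMF
  rw [show (∑ j ∈ Finset.range v, Real.exp (-a * j / v)) = tZ v a from rfl,
    Real.log_div (Real.exp_ne_zero _) (tZ_pos v hv a).ne', Real.log_exp]

lemma gibbs {ι : Type*} (s : Finset ι) (p q : ι → ℝ)
    (hp : ∀ i ∈ s, 0 < p i) (hq : ∀ i ∈ s, 0 < q i)
    (hps : ∑ i ∈ s, p i = 1) (hqs : ∑ i ∈ s, q i = 1) :
    -∑ i ∈ s, p i * Real.log (p i) ≤ -∑ i ∈ s, p i * Real.log (q i) := by
  have h : ∀ i ∈ s, p i * Real.log (q i) - p i * Real.log (p i) ≤ q i - p i := by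
    intro i hi
    have hpi := hp i hi; have hqi := hq i hi
    calc p i * Real.log (q i) - p i * Real.log (p i)
        = p i * Real.log (q i / p i) := by
          rw [← mul_sub, Real.log_div hqi.ne' hpi.ne']
      _ ≤ p i * (q i / p i - 1) :=
          mul_le_mul_of_nonneg_left (Real.log_le_sub_one_of_pos (div_pos hqi hpi)) hpi.le
      _ = q i - p i := by field_simp
  have h2 := Finset.sum_le_sum h
  rw [Finset.sum_sub_distrib, Finset.sum_sub_distrib, hps, hqs] at h2
  linarith

lemma mean_mono (v : ℕ) (hv : 1 ≤ v) (a b : ℝ) (hba : b ≤ a) :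
    (∑ i ∈ Finset.range v, (i : ℝ) * Real.exp (-a * i / v)) * tZ v b
      ≤ (∑ i ∈ Finset.range v, (i : ℝ) * Real.exp (-b * i / v)) * tZ v a := by
  have hv0 : (0:ℝ) < v := by exact_mod_cast hv
  set A : ℕ → ℝ := fun i => (i : ℝ) * Real.exp (-a * i / v) with hA
  set B : ℕ → ℝ := fun j => Real.exp (-b * j / v) with hB
  set C : ℕ → ℝ := fun i => (i : ℝ) * Real.exp (-b * i / v) with hC
  set D : ℕ → ℝ := fun j => Real.exp (-a * j / v) with hD
  have key : ∀ i j : ℕ, A i * B j + A j * B i ≤ C i * D j + C j * D i := by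
    have main : ∀ i j : ℕ, (i:ℝ) ≤ j → A i * B j + A j * B i ≤ C i * D j + C j * D i := by
      intro i j hij
      simp only [hA, hB, hC, hD]
      rw [mul_assoc, mul_assoc, mul_assoc, mul_assoc, ← Real.exp_add, ← Real.exp_add,
        ← Real.exp_add, ← Real.exp_add]
      have e1 : -b * ↑i / ↑v + -a * ↑j / ↑v = -a * ↑j / ↑v + -b * ↑i / ↑v := by ring
      have e2 : -b * ↑j / ↑v + -a * ↑i / ↑v = -a * ↑i / ↑v + -b * ↑j / ↑v := by ring
      rw [e1, e2]
      have hexp : Real.exp (-a * ↑j / ↑v + -b * ↑i / ↑v) ≤ Real.exp (-a * ↑i / ↑v + -b * ↑j / ↑v) := by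
        apply Real.exp_le_exp.mpr
        rw [div_add_div _ _ hv0.ne' hv0.ne', div_add_div _ _ hv0.ne' hv0.ne', div_le_div_iff₀ (by positivity) (by positivity)]
        have h1 : (0:ℝ) ≤ (a - b) * ((j:ℝ) - i) := mul_nonneg (by linarith) (by linarith)
        nlinarith [mul_nonneg (mul_nonneg (mul_nonneg h1 hv0.le) hv0.le) hv0.le]
      nlinarith [Real.exp_pos (-a * ↑i / ↑v + -b * ↑j / ↑v), Real.exp_pos (-a * ↑j / ↑v + -b * ↑i / ↑v)]
    intro i j
    rcases le_total (i:ℝ) j with h | h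
    · exact main i j h
    · have := main j i h; linarith
  have expand : ∀ (F G : ℕ → ℝ),
      ∑ i ∈ Finset.range v, ∑ j ∈ Finset.range v, (F i * G j + F j * G i)
        = 2 * ((∑ i ∈ Finset.range v, F i) * (∑ j ∈ Finset.range v, G j)) := by
    intro F G
    rw [Finset.sum_mul_sum]
    simp only [Finset.sum_add_distrib]
    rw [Finset.sum_comm (f := fun i j => F j * G i)]
    ring
  have hsum : ∑ i ∈ Finset.range v, ∑ j ∈ Finset.range v, (A i * B j + A j * B i)
      ≤ ∑ i ∈ Finset.range v, ∑ j ∈ Finset.range v, (C i * D j + C j * D i) :=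
    Finset.sum_le_sum fun i _ => Finset.sum_le_sum fun j _ => key i j
  rw [expand, expand] at hsum
  show (∑ i ∈ Finset.range v, A i) * tZ v b ≤ (∑ i ∈ Finset.range v, C i) * tZ v a
  have hZb : tZ v b = ∑ j ∈ Finset.range v, B j := rfl
  have hZa : tZ v a = ∑ j ∈ Finset.range v, D j := rfl
  rw [hZb, hZa]; linarith

lemma cross_ent (v : ℕ) (hv : 1 ≤ v) (a b : ℝ) :
    -∑ i ∈ Finset.range v, tiltedPMF v a i * Real.log (tiltedPMF v b i)
      = (b / v) * (∑ i ∈ Finset.range v, tiltedPMF v a i * i) + Real.log (tZ v b) := by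
  have hv0 : (0:ℝ) < v := by exact_mod_cast hv
  have step : ∀ i ∈ Finset.range v, tiltedPMF v a i * Real.log (tiltedPMF v b i)
      = -((b / v) * (tiltedPMF v a i * i)) - Real.log (tZ v b) * tiltedPMF v a i := by
    intro i _
    rw [log_tiltedPMF v hv b i]
    field_simp
  rw [Finset.sum_congr rfl step, Finset.sum_sub_distrib]
  rw [Finset.sum_neg_distrib, ← Finset.mul_sum, ← Finset.mul_sum, tiltedPMF_sum v hv a]
  ring

lemma tiltedEntropy_eq (v : ℕ) (hv : 1 ≤ v) (b : ℝ) :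
    tiltedEntropy v b
      = (b / v) * (∑ i ∈ Finset.range v, tiltedPMF v b i * i) + Real.log (tZ v b) :=
  cross_ent v hv b b

lemma tiltedEntropy_mono (v : ℕ) (hv : 1 ≤ v) (a b : ℝ) (hb : 0 ≤ b) (hba : b ≤ a) :
    tiltedEntropy v a ≤ tiltedEntropy v b := by
  have hv0 : (0:ℝ) < v := by exact_mod_cast hv
  have hZa := tZ_pos v hv a
  have hZb := tZ_pos v hv b
  have hmean : ∀ c : ℝ, ∑ i ∈ Finset.range v, tiltedPMF v c i * i
      = (∑ i ∈ Finset.range v, (i:ℝ) * Real.exp (-c * i / v)) / tZ v c := by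
    intro c
    rw [Finset.sum_div]
    apply Finset.sum_congr rfl
    intro i _
    unfold tiltedPMF
    rw [show (∑ j ∈ Finset.range v, Real.exp (-c * j / v)) = tZ v c from rfl]
    field_simp
  have hMle : ∑ i ∈ Finset.range v, tiltedPMF v a i * i
      ≤ ∑ i ∈ Finset.range v, tiltedPMF v b i * i := by
    rw [hmean a, hmean b, div_le_div_iff₀ hZa hZb]
    exact mean_mono v hv a b hba
  have hgibbs : tiltedEntropy v a
      ≤ -∑ i ∈ Finset.range v, tiltedPMF v a i * Real.log (tiltedPMF v b i) :=
    gibbs (Finset.range v) _ _ (fun i _ => tiltedPMF_pos v hv a i)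
      (fun i _ => tiltedPMF_pos v hv b i) (tiltedPMF_sum v hv a) (tiltedPMF_sum v hv b)
  rw [cross_ent v hv a b] at hgibbs
  rw [tiltedEntropy_eq v hv b]
  have : (b / v) * (∑ i ∈ Finset.range v, tiltedPMF v a i * i)
      ≤ (b / v) * (∑ i ∈ Finset.range v, tiltedPMF v b i * i) :=
    mul_le_mul_of_nonneg_left hMle (by positivity)
  linarith

lemma entropy_prod {d : ℕ} (v : Fin d → ℕ) (p : Fin d → ℕ → ℝ)
    (hpos : ∀ t, ∀ i ∈ Finset.range (v t), 0 < p t i)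
    (hsum : ∀ t, ∑ i ∈ Finset.range (v t), p t i = 1) :
    -∑ y ∈ Fintype.piFinset (fun t => Finset.range (v t)),
        (∏ t, p t (y t)) * Real.log (∏ t, p t (y t))
      = ∑ t, (-∑ i ∈ Finset.range (v t), p t i * Real.log (p t i)) := by
  have hmem : ∀ y ∈ Fintype.piFinset (fun t => Finset.range (v t)),
      ∀ t, y t ∈ Finset.range (v t) := fun y hy t => Fintype.mem_piFinset.mp hy t
  have step1 : ∀ y ∈ Fintype.piFinset (fun t => Finset.range (v t)),
      (∏ t, p t (y t)) * Real.log (∏ t, p t (y t))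
        = ∑ t, ∏ s, Function.update p t (fun i => p t i * Real.log (p t i)) s (y s) := by
    intro y hy
    rw [Real.log_prod (fun t _ => (hpos t (y t) (hmem y hy t)).ne'), Finset.mul_sum]
    refine Finset.sum_congr rfl fun t _ => ?_
    have hr : ∏ s, Function.update p t (fun i => p t i * Real.log (p t i)) s (y s)
        = (p t (y t) * Real.log (p t (y t))) * ∏ s ∈ Finset.univ.erase t, p s (y s) := by
      rw [← Finset.mul_prod_erase Finset.univ _ (Finset.mem_univ t)]
      congr 1
      · simp
      · exact Finset.prod_congr rfl fun s hs => by
          rw [Function.update_of_ne (Finset.ne_of_mem_erase hs)]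
    rw [hr, ← Finset.mul_prod_erase Finset.univ (fun s => p s (y s)) (Finset.mem_univ t)]
    ring
  rw [Finset.sum_congr rfl step1, Finset.sum_comm]
  rw [← Finset.sum_neg_distrib]
  refine Finset.sum_congr rfl fun t _ => ?_
  rw [← Finset.prod_univ_sum]
  have hfact : ∀ s : Fin d, ∑ i ∈ Finset.range (v s),
      Function.update p t (fun i => p t i * Real.log (p t i)) s i
        = Function.update (fun s => (1:ℝ)) t
            (∑ i ∈ Finset.range (v t), p t i * Real.log (p t i)) s := by
    intro s
    rcases eq_or_ne s t with rfl | hst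
    · simp
    · rw [Function.update_of_ne hst, Function.update_of_ne hst, hsum s]
  rw [Finset.prod_congr rfl (fun s _ => hfact s), Finset.prod_update_of_mem (Finset.mem_univ t)]
  simp

/-- Discrete validity–diversity trade-off: in the product geometric model, if
`P(V) ≥ 1 − ε` for some `ε ∈ (0,1)`, then
`Div(P) ≤ exp(−∑_{t=1}^d Δ_{v_t}(ln(1/ε)))`. -/
theorem diversity_le_of_validity (d : ℕ) (hd : 1 ≤ d)
    (q : Fin d → ℝ) (hq : ∀ t, 0 < q t ∧ q t < 1)
    (v : Fin d → ℕ) (hv : ∀ t, 1 ≤ v t)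
    (ε : ℝ) (hε : 0 < ε ∧ ε < 1)
    (hval : 1 - ε ≤ validMass q v) :
    diversity q v ≤ Real.exp (-∑ t, entropyLoss (v t) (Real.log (1 / ε))) := by
  set L : ℝ := Real.log (1 / ε) with hL
  set a : Fin d → ℝ := fun t => (v t : ℝ) * Real.log (1 / q t) with ha
  set S : Fin d → ℝ := fun t => ∑ i ∈ Finset.range (v t), q t ^ i with hS
  have hq0 : ∀ t, (0:ℝ) < q t := fun t => (hq t).1
  have hq1 : ∀ t, q t < 1 := fun t => (hq t).2
  have hvR : ∀ t, (0:ℝ) < (v t : ℝ) := fun t => by exact_mod_cast hv t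
  -- tiltedPMF at a t is the truncated geometric
  have hexp : ∀ t (i : ℕ), Real.exp (-(a t) * i / (v t)) = q t ^ i := by
    intro t i
    have : -(a t) * i / (v t) = (i : ℝ) * Real.log (q t) := by
      simp only [ha, one_div, Real.log_inv]
      field_simp [(hvR t).ne']
    rw [this, Real.exp_nat_mul, Real.exp_log (hq0 t)]
  have hZ : ∀ t, tZ (v t) (a t) = S t := by
    intro t
    unfold tZ
    exact Finset.sum_congr rfl fun j _ => hexp t j
  have htp : ∀ t i, tiltedPMF (v t) (a t) i = q t ^ i / S t := by
    intro t i
    unfold tiltedPMF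
    rw [hexp t i]
    congr 1
    exact Finset.sum_congr rfl fun j _ => hexp t j
  have hSpos : ∀ t, 0 < S t := fun t => by
    rw [← hZ t]; exact tZ_pos (v t) (hv t) (a t)
  -- mass factorization
  have hMfact : validMass q v = ∏ t, ((1 - q t) * S t) := by
    unfold validMass validSet geomProd
    rw [← Finset.prod_univ_sum (fun t => Finset.range (v t))
      (fun t j => (1 - q t) * q t ^ j)]
    refine Finset.prod_congr rfl fun t _ => ?_
    simp only [hS]
    rw [Finset.mul_sum]
  have hMpos : 0 < validMass q v := by
    rw [hMfact]
    exact Finset.prod_pos fun t _ => mul_pos (by linarith [hq1 t]) (hSpos t)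
  -- conditional probabilities factorize
  have hfrac : ∀ y ∈ validSet v,
      geomProd q y / validMass q v = ∏ t, tiltedPMF (v t) (a t) (y t) := by
    intro y hy
    rw [hMfact]
    unfold geomProd
    rw [← Finset.prod_div_distrib]
    refine Finset.prod_congr rfl fun t _ => ?_
    rw [htp t (y t)]
    rw [mul_div_mul_left _ _ (by linarith [hq1 t] : (1:ℝ) - q t ≠ 0)]
  -- entropy factorization
  have hCE : condEntropy q v = ∑ t, tiltedEntropy (v t) (a t) := by
    unfold condEntropy
    have : ∀ y ∈ validSet v,
        (geomProd q y / validMass q v) * Real.log (geomProd q y / validMass q v)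
          = (∏ t, tiltedPMF (v t) (a t) (y t)) * Real.log (∏ t, tiltedPMF (v t) (a t) (y t)) := by
      intro y hy; rw [hfrac y hy]
    rw [Finset.sum_congr rfl this]
    have := entropy_prod v (fun t => tiltedPMF (v t) (a t))
      (fun t i _ => tiltedPMF_pos (v t) (hv t) (a t) i)
      (fun t => tiltedPMF_sum (v t) (hv t) (a t))
    rw [show validSet v = Fintype.piFinset fun t => Finset.range (v t) from rfl, this]
    exact Finset.sum_congr rfl fun t _ => by rw [tiltedEntropy]
  -- card of valid set
  have hcard : ((validSet v).card : ℝ) = ∏ t, ((v t : ℕ) : ℝ) := by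
    rw [show validSet v = Fintype.piFinset fun t => Finset.range (v t) from rfl,
      Fintype.card_piFinset]
    push_cast
    simp
  -- diversity as exp of minus entropy loss
  have hdiv : diversity q v = Real.exp (-∑ t, entropyLoss (v t) (a t)) := by
    unfold diversity
    rw [hCE, hcard]
    have hprodpos : (0:ℝ) < ∏ t, ((v t : ℕ) : ℝ) := Finset.prod_pos fun t _ => hvR t
    rw [← Real.exp_log hprodpos, ← Real.exp_sub]
    congr 1
    rw [Real.log_prod (fun t _ => (hvR t).ne')]
    unfold entropyLoss
    rw [← Finset.sum_sub_distrib, ← Finset.sum_neg_distrib]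
    exact Finset.sum_congr rfl fun t _ => by ring
  -- the constraint: L ≤ a t
  have hL0 : 0 ≤ L := Real.log_nonneg (one_le_one_div hε.1 hε.2.le)
  have hLa : ∀ t, L ≤ a t := by
    intro t
    have hqne : ∀ s, q s - 1 ≠ 0 := fun s => sub_ne_zero_of_ne (hq1 s).ne
    have hgs : ∀ s, (1 - q s) * S s = 1 - q s ^ (v s) := by
      intro s
      simp only [hS]
      rw [geom_sum_eq (hq1 s).ne (v s)]
      field_simp [hqne s]
      ring
    have hfle1 : ∀ s, (1 - q s) * S s ≤ 1 := by
      intro s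
      rw [hgs s]
      have : 0 ≤ q s ^ (v s) := pow_nonneg (hq0 s).le _
      linarith
    have hfpos : ∀ s, 0 < (1 - q s) * S s := fun s =>
      mul_pos (by linarith [hq1 s]) (hSpos s)
    have hle : validMass q v ≤ (1 - q t) * S t := by
      rw [hMfact, ← Finset.mul_prod_erase Finset.univ _ (Finset.mem_univ t)]
      have : ∏ s ∈ Finset.univ.erase t, (1 - q s) * S s ≤ 1 :=
        Finset.prod_le_one (fun s _ => (hfpos s).le) (fun s _ => hfle1 s)
      nlinarith [hfpos t]
    have hqε : q t ^ (v t) ≤ ε := by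
      rw [hgs t] at hle; linarith
    have hlog : (v t : ℝ) * Real.log (q t) ≤ Real.log ε := by
      rw [← Real.log_pow]
      exact Real.log_le_log (pow_pos (hq0 t) _) hqε
    have h1 : L = -Real.log ε := by
      rw [hL, one_div, Real.log_inv]
    have h2 : a t = (v t : ℝ) * (-Real.log (q t)) := by
      simp only [ha, one_div, Real.log_inv]
    rw [h1, h2]
    nlinarith [hlog]
  -- conclude
  rw [hdiv, Real.exp_le_exp, neg_le_neg_iff]
  refine Finset.sum_le_sum fun t _ => ?_
  unfold entropyLoss
  have := tiltedEntropy_mono (v t) (hv t) (a t) L hL0 (hLa t)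
  linarith
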